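/- arXiv:math/0511724 — 2 statements merged into one kernel-verified Lean document; each statement's English description precedes it below -/
import Mathlib

section
/- Let E > 0, ν > 0, h > 0, τ > 0 and set K(τ) = 1 + 3ν²τ²/E³. Suppose a sequence of functions wₙ on (0, ∞) satisfies w₀ ≡ 1 and the bounds |w_{2k+1}(τ)| ≤ (K(τ)/2) ∫₀^τ e^{2ν̃(r-τ)} (1+r²)^{-1} |w_{2k}(r)| dr and |w_{2k+2}(τ)| ≤ (K(τ)/2) ∫₀^τ (1+r²)^{-1} |w_{2k+1}(r)| dr for all k ≥ 0, where ν̃ ≥ 1/2. Then for all n ≥ 0, |wₙ(τ)| ≤ (K(τ)ⁿ/n!)·(τ/(1+τ))ⁿ. -/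
open MeasureTheory

lemma my_deriv_aux (n : ℕ) (r : ℝ) (hr : 0 ≤ r) :
    HasDerivAt (fun x : ℝ => (x/(1+x))^(n+1) / ((n:ℝ)+1))
      ((r/(1+r))^n / (1+r)^2) r := by
  have h0 : (1:ℝ) + r ≠ 0 := by positivity
  have hu : HasDerivAt (fun x : ℝ => x/(1+x)) ((1*(1+r) - r*(0+1))/(1+r)^2) r := by
    exact (hasDerivAt_id r).div ((hasDerivAt_const r 1).add (hasDerivAt_id r)) h0
  have hp : HasDerivAt (fun x : ℝ => (x/(1+x))^(n+1) / ((n:ℝ)+1))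
      (((n+1:ℕ):ℝ) * (r/(1+r))^(n+1-1) * ((1*(1+r) - r*(0+1))/(1+r)^2) / ((n:ℝ)+1)) r :=
    (hu.fun_pow (n+1)).div_const ((n:ℝ)+1)
  convert hp using 1
  have hn : ((n:ℝ)+1) ≠ 0 := by positivity
  simp only [Nat.add_sub_cancel]
  push_cast
  field_simp
  ring

lemma my_integral_aux (n : ℕ) (τ : ℝ) (hτ : 0 < τ) :
    ∫ r in (0:ℝ)..τ, (r/(1+r))^n / (1+r)^2
      = (τ/(1+τ))^(n+1) / ((n:ℝ)+1) := by
  have hicc : Set.uIcc (0:ℝ) τ = Set.Icc 0 τ := Set.uIcc_of_le hτ.le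
  have hcont : ContinuousOn (fun r : ℝ => (r/(1+r))^n / (1+r)^2) (Set.uIcc 0 τ) := by
    apply ContinuousOn.div
    · apply ContinuousOn.pow
      apply ContinuousOn.div continuousOn_id (by fun_prop)
      intro x hx
      rw [hicc] at hx
      have : 0 ≤ x := hx.1
      positivity
    · fun_prop
    · intro x hx
      rw [hicc] at hx
      have : 0 ≤ x := hx.1
      positivity
  rw [intervalIntegral.integral_eq_sub_of_hasDerivAt
    (f := fun x : ℝ => (x/(1+x))^(n+1) / ((n:ℝ)+1))
    (fun r hr => my_deriv_aux n r (by rw [hicc] at hr; exact hr.1))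
    (hcont.intervalIntegrable)]
  norm_num

lemma my_compare (f g : ℝ → ℝ) (τ : ℝ) (hτ : 0 < τ)
    (hg : IntervalIntegrable g volume 0 τ)
    (hg0 : ∀ r ∈ Set.Icc (0:ℝ) τ, 0 ≤ g r)
    (hfg : ∀ r, 0 < r → r ≤ τ → f r ≤ g r) :
    (∫ r in (0:ℝ)..τ, f r) ≤ ∫ r in (0:ℝ)..τ, g r := by
  by_cases hf : IntervalIntegrable f volume 0 τ
  · apply intervalIntegral.integral_mono_ae_restrict hτ.le hf hg
    have h0 : ∀ᵐ x : ℝ ∂volume, x ≠ 0 := by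
      rw [MeasureTheory.ae_iff]
      convert Real.volume_singleton (a := (0:ℝ)) using 2
      ext x; simp
    filter_upwards [MeasureTheory.ae_restrict_mem measurableSet_Icc,
      MeasureTheory.ae_restrict_of_ae h0] with x hx hx0
    exact hfg x (lt_of_le_of_ne hx.1 (Ne.symm hx0)) hx.2
  · rw [intervalIntegral.integral_undef hf]
    exact intervalIntegral.integral_nonneg hτ.le hg0
theorem stmt7 (E ν νt : ℝ) (hE : 0 < E) (hν : 0 < ν) (hνt : 1/2 ≤ νt)
    (K : ℝ → ℝ) (hK : ∀ τ, K τ = 1 + 3*ν^2*τ^2/E^3)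
    (w : ℕ → ℝ → ℝ)
    (hw0 : ∀ τ : ℝ, w 0 τ = 1)
    (hodd : ∀ k : ℕ, ∀ τ : ℝ, 0 < τ → |w (2*k+1) τ| ≤
      (K τ / 2) * ∫ r in (0:ℝ)..τ, Real.exp (2*νt*(r-τ)) * (1+r^2)⁻¹ * |w (2*k) r|)
    (heven : ∀ k : ℕ, ∀ τ : ℝ, 0 < τ → |w (2*k+2) τ| ≤
      (K τ / 2) * ∫ r in (0:ℝ)..τ, (1+r^2)⁻¹ * |w (2*k+1) r|) :
    ∀ n : ℕ, ∀ τ : ℝ, 0 < τ →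
      |w n τ| ≤ (K τ)^n / (n.factorial : ℝ) * (τ/(1+τ))^n := by
  have hK1 : ∀ τ : ℝ, 1 ≤ K τ := by
    intro τ; rw [hK]; have : 0 ≤ 3*ν^2*τ^2/E^3 := by positivity
    linarith
  have hKmono : ∀ r τ : ℝ, 0 ≤ r → r ≤ τ → K r ≤ K τ := by
    intro r τ h1 h2; rw [hK, hK]
    have h3 : r^2 ≤ τ^2 := pow_le_pow_left₀ h1 h2 2
    gcongr
  intro n
  induction n with
  | zero =>
    intro τ hτ; simp [hw0]
  | succ n ih =>
    intro τ hτ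
    have hKτ0 : (0:ℝ) < K τ := lt_of_lt_of_le one_pos (hK1 τ)
    set c : ℝ := K τ with hc
    have hcn : (0:ℝ) ≤ c^n := pow_nonneg hKτ0.le n
    set g : ℝ → ℝ := fun r => 2 * c^n / (n.factorial : ℝ) * ((r/(1+r))^n / (1+r)^2) with hg
    have hicc : Set.uIcc (0:ℝ) τ = Set.Icc 0 τ := Set.uIcc_of_le hτ.le
    have hgint : IntervalIntegrable g MeasureTheory.volume 0 τ := by
      apply ContinuousOn.intervalIntegrable
      apply ContinuousOn.mul continuousOn_const
      apply ContinuousOn.div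
      · apply ContinuousOn.pow
        apply ContinuousOn.div continuousOn_id (by fun_prop)
        intro x hx; rw [hicc] at hx; have : 0 ≤ x := hx.1; positivity
      · fun_prop
      · intro x hx; rw [hicc] at hx; have : 0 ≤ x := hx.1; positivity
    have hg0 : ∀ r ∈ Set.Icc (0:ℝ) τ, 0 ≤ g r := by
      intro r hr
      have h1 : 0 ≤ r := hr.1
      have h2 : (0:ℝ) < 1 + r := by linarith
      show 0 ≤ 2 * c^n / (n.factorial : ℝ) * ((r/(1+r))^n / (1+r)^2)
      apply mul_nonneg
      · apply div_nonneg (by linarith) (by positivity)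
      · apply div_nonneg (pow_nonneg (div_nonneg h1 h2.le) n) (by positivity)
    have hgval : (∫ r in (0:ℝ)..τ, g r)
        = 2 * c^n / (n.factorial : ℝ) * ((τ/(1+τ))^(n+1) / ((n:ℝ)+1)) := by
      simp only [hg]
      rw [intervalIntegral.integral_const_mul, my_integral_aux n τ hτ]
    -- pointwise bound on |w n r|
    have hwn : ∀ r : ℝ, 0 < r → r ≤ τ →
        |w n r| ≤ c^n / (n.factorial : ℝ) * (r/(1+r))^n := by
      intro r hr hrτ
      refine (ih r hr).trans ?_
      have hKr : 0 ≤ K r := le_trans zero_le_one (hK1 r)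
      have h2 : (0:ℝ) < 1 + r := by linarith
      have h4 : (K r)^n ≤ c^n := pow_le_pow_left₀ hKr (hKmono r τ hr.le hrτ) n
      have hn0 : (0:ℝ) < (n.factorial : ℝ) := by positivity
      exact mul_le_mul_of_nonneg_right ((div_le_div_iff_of_pos_right hn0).mpr h4)
        (pow_nonneg (div_nonneg hr.le h2.le) n)
    -- the generic step
    have hstep : ∀ f : ℝ → ℝ, (∀ r, 0 < r → r ≤ τ → f r ≤ g r) →
        |w (n+1) τ| ≤ (K τ / 2) * ∫ r in (0:ℝ)..τ, f r →
        |w (n+1) τ| ≤ c^(n+1) / ((n+1).factorial : ℝ) * (τ/(1+τ))^(n+1) := by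
      intro f hfg hwineq
      have h1 : (∫ r in (0:ℝ)..τ, f r) ≤ ∫ r in (0:ℝ)..τ, g r :=
        my_compare f g τ hτ hgint hg0 hfg
      have h2 : |w (n+1) τ| ≤ (K τ / 2) *
          (2 * c^n / (n.factorial : ℝ) * ((τ/(1+τ))^(n+1) / ((n:ℝ)+1))) := by
        refine hwineq.trans ?_
        rw [← hgval]
        exact mul_le_mul_of_nonneg_left h1 (by linarith [hK1 τ])
      refine h2.trans (le_of_eq ?_)
      have hfac : ((n+1).factorial : ℝ) = ((n:ℝ)+1) * (n.factorial : ℝ) := by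
        rw [Nat.factorial_succ]; push_cast; ring
      have hn0 : (0:ℝ) < (n.factorial : ℝ) := by positivity
      rw [hfac, ← hc, pow_succ]
      field_simp
      ring
    -- the common pointwise estimate for (1+r^2)⁻¹ and the |w n r| factor
    have hcore : ∀ r : ℝ, 0 < r → r ≤ τ →
        (1+r^2)⁻¹ * |w n r| ≤ g r := by
      intro r hr hrτ
      have h2 : (0:ℝ) < 1 + r := by linarith
      have h3 : (0:ℝ) < 1 + r^2 := by positivity
      have hi : (1+r^2)⁻¹ ≤ 2 / (1+r)^2 := by
        rw [inv_eq_one_div, div_le_div_iff₀ h3 (by positivity)]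
        nlinarith [sq_nonneg (1-r)]
      have hw' := hwn r hr hrτ
      have hB : (0:ℝ) ≤ c^n / (n.factorial : ℝ) * (r/(1+r))^n := by
        apply mul_nonneg (div_nonneg hcn (by positivity))
        exact pow_nonneg (div_nonneg hr.le h2.le) n
      have : (1+r^2)⁻¹ * |w n r| ≤ (2/(1+r)^2) * (c^n / (n.factorial : ℝ) * (r/(1+r))^n) :=
        mul_le_mul hi hw' (abs_nonneg _) (by positivity)
      refine this.trans (le_of_eq ?_)
      show _ = 2 * c^n / (n.factorial : ℝ) * ((r/(1+r))^n / (1+r)^2)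
      ring
    rcases Nat.even_or_odd n with ⟨k, hk⟩ | ⟨k, hk⟩
    · have hn : n + 1 = 2*k + 1 := by omega
      have h2k : 2*k = n := by omega
      refine hstep (fun r => Real.exp (2*νt*(r-τ)) * (1+r^2)⁻¹ * |w (2*k) r|) ?_ ?_
      · intro r hr hrτ
        have he : Real.exp (2*νt*(r-τ)) ≤ 1 := by
          rw [Real.exp_le_one_iff]
          have h4 : r - τ ≤ 0 := by linarith
          nlinarith
        have h3 : (0:ℝ) < 1 + r^2 := by positivity
        have hg0r : 0 ≤ g r := hg0 r ⟨hr.le, hrτ⟩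
        calc Real.exp (2*νt*(r-τ)) * (1+r^2)⁻¹ * |w (2*k) r|
            ≤ 1 * ((1+r^2)⁻¹ * |w (2*k) r|) := by
              rw [mul_assoc]
              apply mul_le_mul_of_nonneg_right he (by positivity)
          _ = (1+r^2)⁻¹ * |w n r| := by rw [one_mul, h2k]
          _ ≤ g r := hcore r hr hrτ
      · have h := hodd k τ hτ
        rw [← hn] at h
        exact h
    · have hn : n + 1 = 2*k + 2 := by omega
      have h2k : 2*k + 1 = n := by omega
      refine hstep (fun r => (1+r^2)⁻¹ * |w (2*k+1) r|) ?_ ?_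
      · intro r hr hrτ
        have := hcore r hr hrτ
        rw [← h2k] at this
        exact this
      · have h := heven k τ hτ
        rw [← hn] at h
        exact h
end

section
/- Let γ ∈ ℂ and h > 0. The two functions p = h^{1/2 - i|γ|²/(2h)} Γ(1 - i|γ|²/(2h)) e^{π|γ|²/(4h)}/(iγ√π) and q = h^{1/2 - i|γ|²/(2h)} Γ(1 - i|γ|²/(2h)) e^{-π|γ|²/(4h)}/(iγ√π) satisfy |p|² - |q|² = 1. -/
open Complex Real

lemma gamma_abs_sq (t : ℝ) (ht : 0 < t) :
    ‖Complex.Gamma (1 - Complex.I * t)‖^2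
      = Real.pi * t / Real.sinh (Real.pi * t) := by
  have hne : (Complex.I * t : ℂ) ≠ 0 := by
    simp [Complex.ext_iff, Complex.I_ne_zero, ht.ne']
  have h1 : (starRingEnd ℂ) (Complex.Gamma (1 - Complex.I * t))
      = Complex.Gamma (1 + Complex.I * t) := by
    rw [← Complex.Gamma_conj]
    congr 1
    simp [Complex.ext_iff]
  have h2 : Complex.Gamma (1 + Complex.I * t)
      = Complex.I * t * Complex.Gamma (Complex.I * t) := by
    have := Complex.Gamma_add_one (Complex.I * t) hne
    rw [← this]; ring_nf
  have h3 := Complex.Gamma_mul_Gamma_one_sub (Complex.I * t)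
  have hs : Complex.sin (↑Real.pi * (Complex.I * t)) = Real.sinh (Real.pi * t) * Complex.I := by
    have : (↑Real.pi * (Complex.I * t) : ℂ) = (↑(Real.pi * t)) * Complex.I := by
      push_cast; ring
    rw [this, Complex.sin_mul_I, Complex.ofReal_sinh]
  have hsh : Real.sinh (Real.pi * t) ≠ 0 := by
    have : Real.pi * t ≠ 0 := by positivity
    simpa [Real.sinh_ne_zero]
  have key : Complex.Gamma (1 - Complex.I * t) * (starRingEnd ℂ) (Complex.Gamma (1 - Complex.I * t))
      = ↑(Real.pi * t / Real.sinh (Real.pi * t)) := by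
    rw [h1, h2]
    rw [mul_comm (Complex.I * ↑t), ← mul_assoc, mul_comm (Complex.Gamma (1 - Complex.I * ↑t)), h3, hs]
    push_cast
    rw [show ↑Real.pi / (Complex.sinh (↑Real.pi * ↑t) * Complex.I) * (Complex.I * ↑t)
        = ↑Real.pi * ↑t * Complex.I / (Complex.sinh (↑Real.pi * ↑t) * Complex.I) from by ring,
      mul_div_mul_right _ _ Complex.I_ne_zero]
  have key2 := Complex.mul_conj (Complex.Gamma (1 - Complex.I * t))
  rw [key] at key2
  have := Complex.ofReal_inj.mp key2.symm
  rw [Complex.sq_norm]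
  linarith [this]

theorem stmt12 (γ : ℂ) (hγ : γ ≠ 0) (h : ℝ) (hh : 0 < h) (p q : ℂ)
    (hp : p = (h:ℂ) ^ ((1:ℂ)/2 - Complex.I * (‖γ‖)^2 / (2*h)) *
      Complex.Gamma (1 - Complex.I * (‖γ‖)^2 / (2*h)) *
      Complex.exp ((Real.pi * (‖γ‖)^2 / (4*h) : ℝ)) /
      (Complex.I * γ * Real.sqrt Real.pi))
    (hq : q = (h:ℂ) ^ ((1:ℂ)/2 - Complex.I * (‖γ‖)^2 / (2*h)) *
      Complex.Gamma (1 - Complex.I * (‖γ‖)^2 / (2*h)) *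
      Complex.exp ((-(Real.pi * (‖γ‖)^2 / (4*h)) : ℝ)) /
      (Complex.I * γ * Real.sqrt Real.pi)) :
    ‖p‖ ^ 2 - ‖q‖ ^ 2 = 1 := by
  set r : ℝ := ‖γ‖ with hr
  have hr0 : 0 < r := norm_pos_iff.mpr hγ
  set t : ℝ := r^2/(2*h) with htdef
  have ht : 0 < t := by positivity
  have harg : (Complex.I * (r:ℂ)^2 / (2*(h:ℂ)) : ℂ) = Complex.I * (t:ℂ) := by
    rw [htdef]; push_cast; ring
  rw [harg] at hp hq
  have hre : ((1:ℂ)/2 - Complex.I * (t:ℂ)).re = 1/2 := by simp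
  have habs1 : ‖(h:ℂ) ^ ((1:ℂ)/2 - Complex.I * (t:ℂ))‖ = h ^ ((1:ℝ)/2) := by
    rw [Complex.norm_cpow_eq_rpow_re_of_pos hh, hre]
  have hden : ‖Complex.I * γ * (Real.sqrt Real.pi : ℂ)‖ = r * Real.sqrt Real.pi := by
    simp [norm_mul, Complex.norm_I, Complex.norm_real, Real.norm_eq_abs, _root_.abs_of_nonneg (Real.sqrt_nonneg _), hr]
  set G : ℝ := ‖Complex.Gamma (1 - Complex.I * (t:ℂ))‖ with hG
  have hG2 : G^2 = Real.pi * t / Real.sinh (Real.pi * t) := gamma_abs_sq t ht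
  set a : ℝ := Real.pi * r^2 / (4*h) with ha
  have hpabs : ‖p‖ = h ^ ((1:ℝ)/2) * G * Real.exp a / (r * Real.sqrt Real.pi) := by
    rw [hp, norm_div, norm_mul, norm_mul, habs1, hden, Complex.norm_exp_ofReal, ← hG]
  have hqabs : ‖q‖ = h ^ ((1:ℝ)/2) * G * Real.exp (-a) / (r * Real.sqrt Real.pi) := by
    rw [hq, norm_div, norm_mul, norm_mul, habs1, hden, Complex.norm_exp_ofReal, ← hG]
  have hA : (h ^ ((1:ℝ)/2))^2 = h := by
    rw [← Real.rpow_natCast (h ^ ((1:ℝ)/2)) 2, ← Real.rpow_mul hh.le]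
    norm_num
  have h2a : 2 * a = Real.pi * t := by rw [ha, htdef]; field_simp; ring
  have hsq : (Real.sqrt Real.pi)^2 = Real.pi := Real.sq_sqrt Real.pi_pos.le
  have hsh : Real.sinh (Real.pi * t) ≠ 0 := by
    have : Real.pi * t ≠ 0 := by positivity
    simpa [Real.sinh_ne_zero]
  have hr2 : r^2 = 2*h*t := by rw [htdef]; field_simp
  clear_value G a t r
  have hp2 : ‖p‖ ^ 2 = Real.exp (Real.pi*t) / (2 * Real.sinh (Real.pi*t)) := by
    rw [hpabs, div_pow, mul_pow, mul_pow, mul_pow, hA, hG2, hsq, ← Real.exp_nat_mul]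
    push_cast
    rw [h2a, hr2]
    field_simp
  have hq2 : ‖q‖ ^ 2 = Real.exp (-(Real.pi*t)) / (2 * Real.sinh (Real.pi*t)) := by
    rw [hqabs, div_pow, mul_pow, mul_pow, mul_pow, hA, hG2, hsq, ← Real.exp_nat_mul]
    push_cast
    rw [show (2:ℝ) * -a = -(2*a) by ring, h2a, hr2]
    field_simp
  rw [hp2, hq2, div_sub_div_same, Real.sinh_eq, Real.exp_neg]
  have hexp : Real.exp (Real.pi*t) ≠ 0 := (Real.exp_pos _).ne'
  have h2 : Real.exp (Real.pi * t) - (Real.exp (Real.pi * t))⁻¹ ≠ 0 := by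
    have := hsh
    rw [Real.sinh_eq, Real.exp_neg] at this
    intro hc
    apply this
    rw [hc]; simp
  rw [show (2:ℝ) * ((Real.exp (Real.pi*t) - (Real.exp (Real.pi*t))⁻¹)/2)
      = Real.exp (Real.pi*t) - (Real.exp (Real.pi*t))⁻¹ by ring, div_self h2]
end
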